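/- Let K ≥ 1, let J, H : Fin K → ℝ be families of real numbers with max_k J k > min_k J k and max_k H k > min_k H k, and let α ∈ ℝ with 0 ≤ α < 1. Define the min-max normalizations Ĵ k = (J k − min_m J m)/(max_m J m − min_m J m) and Ĥ k = (H k − min_m H m)/(max_m H m − min_m H m), and the score f k = (1−α)·Ĵ k + α·Ĥ k. If i, j : Fin K satisfy f j ≥ f i, then J j − J i ≥ (−α/(1−α))·(max_k J k − min_k J k). -/

import Mathlib

/-- Penultimate inequality in the proof of Theorem 1: switching from policy
`i` to the policy `j` preferred by the picking rule incurs a performance drop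
of at most `(α/(1-α))` times the performance range of the buffer. -/
theorem picking_rule_performance_drop_bound
    (K : ℕ) (hK : 1 ≤ K) (J H : Fin K → ℝ) (α : ℝ)
    (hα0 : 0 ≤ α) (hα1 : α < 1)
    (hJrange : (⨅ m, J m) < ⨆ m, J m)
    (hHrange : (⨅ m, H m) < ⨆ m, H m)
    (Jhat Hhat f : Fin K → ℝ)
    (hJhat : ∀ k, Jhat k = (J k - ⨅ m, J m) / ((⨆ m, J m) - ⨅ m, J m))
    (hHhat : ∀ k, Hhat k = (H k - ⨅ m, H m) / ((⨆ m, H m) - ⨅ m, H m))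
    (hf : ∀ k, f k = (1 - α) * Jhat k + α * Hhat k)
    (i j : Fin K) (hpick : f j ≥ f i) :
    J j - J i ≥ (-α / (1 - α)) * ((⨆ k, J k) - ⨅ k, J k) := by
  have hne : Nonempty (Fin K) := ⟨⟨0, hK⟩⟩
  have hJd : (0:ℝ) < (⨆ m, J m) - ⨅ m, J m := by linarith
  have hHd : (0:ℝ) < (⨆ m, H m) - ⨅ m, H m := by linarith
  have h1α : (0:ℝ) < 1 - α := by linarith
  -- Hhat bounds
  have hHlo : ∀ k, (⨅ m, H m) ≤ H k := fun k =>
    ciInf_le (Set.Finite.bddBelow (Set.finite_range H)) k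
  have hHhi : ∀ k, H k ≤ ⨆ m, H m := fun k =>
    le_ciSup (Set.Finite.bddAbove (Set.finite_range H)) k
  have hHhat0 : ∀ k, 0 ≤ Hhat k := fun k => by
    rw [hHhat k]; exact div_nonneg (by linarith [hHlo k]) hHd.le
  have hHhat1 : ∀ k, Hhat k ≤ 1 := fun k => by
    rw [hHhat k]; rw [div_le_one hHd]; linarith [hHhi k]
  -- from hpick
  have key : (1 - α) * (Jhat j - Jhat i) ≥ -α := by
    have := hpick
    rw [hf i, hf j] at this
    nlinarith [hHhat0 i, hHhat1 i, hHhat0 j, hHhat1 j]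
  have hJdiff : Jhat j - Jhat i = (J j - J i) / ((⨆ m, J m) - ⨅ m, J m) := by
    rw [hJhat i, hJhat j]; ring
  rw [hJdiff] at key
  rw [ge_iff_le, div_mul_eq_mul_div, div_le_iff₀ h1α]
  have := (mul_le_mul_iff_of_pos_right hJd).mpr key.le
  -- key : -α ≤ (1-α) * ((J j - J i)/range)
  have h2 : (1 - α) * ((J j - J i) / ((⨆ m, J m) - ⨅ m, J m)) * ((⨆ m, J m) - ⨅ m, J m)
      = (1 - α) * (J j - J i) := by
    field_simp
  nlinarith [key, hJd]
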